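/- Define ℓ⁰(x) := (1/(2π)) ∫_0^{2π} √(1 + sin²(x)/(1 − cos(u)cos(x))²) du for x ∈ (0,π). Then ℓ⁰(x) → 2 as x → 0⁺. -/

import Mathlib

open Real Filter Topology

noncomputable def ellZero (x : ℝ) : ℝ :=
  (1 / (2 * π)) * ∫ u in (0 : ℝ)..(2 * π),
    Real.sqrt (1 + Real.sin x ^ 2 / (1 - Real.cos u * Real.cos x) ^ 2)

namespace EllZeroAux

lemma cosx_lt_one {x : ℝ} (h0 : 0 < x) (h1 : x ≤ 1) : Real.cos x < 1 := by
  have h := Real.cos_lt_cos_of_nonneg_of_le_pi le_rfl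
    (by linarith [Real.pi_gt_three] : x ≤ π) h0
  simpa using h

lemma cosx_pos {x : ℝ} (h0 : 0 < x) (h1 : x ≤ 1) : 0 < Real.cos x :=
  Real.cos_pos_of_mem_Ioo ⟨by linarith [Real.pi_gt_three], by nlinarith [Real.pi_gt_three]⟩

lemma denom_pos {x : ℝ} (h0 : 0 < x) (h1 : x ≤ 1) (u : ℝ) :
    0 < 1 - Real.cos u * Real.cos x := by
  have h2 := cosx_pos h0 h1
  have h3 := cosx_lt_one h0 h1
  nlinarith [Real.cos_le_one u, mul_nonneg (sub_nonneg.2 (Real.cos_le_one u)) h2.le]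

lemma cont_f {x : ℝ} (h0 : 0 < x) (h1 : x ≤ 1) :
    Continuous (fun u => Real.sqrt (1 + Real.sin x ^ 2 / (1 - Real.cos u * Real.cos x) ^ 2)) := by
  apply Real.continuous_sqrt.comp
  apply continuous_const.add
  apply continuous_const.div
  · exact (continuous_const.sub (Real.continuous_cos.mul continuous_const)).pow 2
  · intro u
    exact pow_ne_zero 2 (ne_of_gt (denom_pos h0 h1 u))

lemma integral_inv_sq_add {x : ℝ} (hx : 0 < x) (δ : ℝ) :
    ∫ u in (0:ℝ)..δ, (u ^ 2 + x ^ 2)⁻¹ = 1 / x * Real.arctan (δ / x) := by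
  have hx' : x ≠ 0 := ne_of_gt hx
  have hderiv : ∀ u ∈ Set.uIcc (0:ℝ) δ,
      HasDerivAt (fun v => 1 / x * Real.arctan (v / x)) ((u ^ 2 + x ^ 2)⁻¹) u := by
    intro u _
    have h1 : HasDerivAt (fun v : ℝ => v / x) (1 / x) u := by
      simpa using (hasDerivAt_id u).div_const x
    have h2 : HasDerivAt (fun v : ℝ => Real.arctan (v / x))
        (1 / (1 + (u / x) ^ 2) * (1 / x)) u :=
      HasDerivAt.comp (h₂ := Real.arctan) (h := fun v : ℝ => v / x) u (Real.hasDerivAt_arctan (u / x)) h1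
    have h3 := h2.const_mul (1 / x)
    refine h3.congr_deriv ?_
    have h4 : 1 + (u / x) ^ 2 ≠ 0 := by positivity
    field_simp
    ring
  have hint : IntervalIntegrable (fun u : ℝ => (u ^ 2 + x ^ 2)⁻¹)
      MeasureTheory.volume 0 δ := by
    apply Continuous.intervalIntegrable
    exact ((continuous_pow 2).add continuous_const).inv₀ fun u =>
      ne_of_gt (show (0:ℝ) < u ^ 2 + x ^ 2 by positivity)
  rw [intervalIntegral.integral_eq_sub_of_hasDerivAt hderiv hint]
  simp [Real.arctan_zero]

lemma denom_le {u x : ℝ} : 1 - Real.cos u * Real.cos x ≤ (u ^ 2 + x ^ 2) / 2 := by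
  nlinarith [sq_nonneg u, sq_nonneg x, Real.one_sub_sq_div_two_le_cos (x := u), Real.one_sub_sq_div_two_le_cos (x := x),
    Real.cos_le_one u, Real.cos_le_one x,
    mul_nonneg (sub_nonneg.2 (Real.cos_le_one u)) (sub_nonneg.2 (Real.cos_le_one x))]

set_option maxHeartbeats 1000000 in
lemma denom_taylor {δ u x : ℝ} (hδ1 : δ ≤ 1) (hu0 : 0 ≤ u) (hu : u ≤ δ)
    (hx0 : 0 ≤ x) (hx : x ≤ δ) :
    (1 - δ ^ 2) * (u ^ 2 + x ^ 2) / 2 ≤ 1 - Real.cos u * Real.cos x := by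
  have hu1 : |u| ≤ 1 := by rw [abs_of_nonneg hu0]; linarith
  have hx1 : |x| ≤ 1 := by rw [abs_of_nonneg hx0]; linarith
  have bu := Real.cos_bound hu1
  have bx := Real.cos_bound hx1
  rw [abs_le, abs_of_nonneg hu0] at bu
  rw [abs_le, abs_of_nonneg hx0] at bx
  have hAu : Real.cos u ≤ 1 - u ^ 2 / 2 + u ^ 4 * (5 / 96) := by linarith [bu.2]
  have hAx : Real.cos x ≤ 1 - x ^ 2 / 2 + x ^ 4 * (5 / 96) := by linarith [bx.2]
  have hu2 : u ^ 2 ≤ δ ^ 2 := by nlinarith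
  have hx2 : x ^ 2 ≤ δ ^ 2 := by nlinarith
  have hu3 : u ^ 2 ≤ 1 := by nlinarith
  have hx3 : x ^ 2 ≤ 1 := by nlinarith
  have hcx0 : 0 ≤ Real.cos x := by nlinarith [bx.1]
  have hAu0 : 0 ≤ 1 - u ^ 2 / 2 + u ^ 4 * (5 / 96) := by nlinarith
  have hz : u ^ 2 * x ^ 2 ≤ 1 := by nlinarith
  have h44 : u ^ 4 * x ^ 4 ≤ u ^ 2 * x ^ 2 := by
    nlinarith [mul_nonneg (sq_nonneg u) (sq_nonneg x), hz]
  have key : Real.cos u * Real.cos x ≤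
      (1 - u ^ 2 / 2 + u ^ 4 * (5 / 96)) * (1 - x ^ 2 / 2 + x ^ 4 * (5 / 96)) :=
    mul_le_mul hAu hAx hcx0 hAu0
  have a1 : u ^ 2 * u ^ 2 ≤ δ ^ 2 * u ^ 2 := mul_le_mul_of_nonneg_right hu2 (sq_nonneg u)
  have a2 : x ^ 2 * x ^ 2 ≤ δ ^ 2 * x ^ 2 := mul_le_mul_of_nonneg_right hx2 (sq_nonneg x)
  have a3 : u ^ 2 * x ^ 2 ≤ δ ^ 2 * x ^ 2 := mul_le_mul_of_nonneg_right hu2 (sq_nonneg x)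
  have a4 : x ^ 2 * u ^ 2 ≤ δ ^ 2 * u ^ 2 := mul_le_mul_of_nonneg_right hx2 (sq_nonneg u)
  have a5 : 0 ≤ u ^ 2 * x ^ 4 := by positivity
  have a6 : 0 ≤ u ^ 4 * x ^ 2 := by positivity
  linarith [key, a1, a2, a3, a4, a5, a6, h44]

lemma cos_le_cos_mid {δ u : ℝ} (hδ0 : 0 ≤ δ) (h1 : δ ≤ u) (h2 : u ≤ 2 * π - δ) :
    Real.cos u ≤ Real.cos δ := by
  rcases le_total u π with h | h
  · exact Real.cos_le_cos_of_nonneg_of_le_pi hδ0 h h1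
  · have he : Real.cos u = Real.cos (2 * π - u) := by
      rw [Real.cos_sub, Real.cos_two_pi, Real.sin_two_pi]; ring
    rw [he]
    exact Real.cos_le_cos_of_nonneg_of_le_pi hδ0 (by linarith [Real.pi_pos]) (by linarith)

end EllZeroAux

set_option maxHeartbeats 1000000 in
theorem ellZero_tendsto_two :
    Filter.Tendsto ellZero (nhdsWithin 0 (Set.Ioi 0)) (nhds 2) := by
  rw [Metric.tendsto_nhds]
  intro ε hε
  set δ : ℝ := min (ε / 4) (1 / 4) with hδdef
  have hδ0 : 0 < δ := lt_min (by linarith) (by norm_num)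
  have hδ4 : δ ≤ 1 / 4 := min_le_right _ _
  have hδε : δ ≤ ε / 4 := min_le_left _ _
  have hδ1 : δ ≤ 1 := by linarith
  have hπ : (3:ℝ) < π := Real.pi_gt_three
  have hcosδ : Real.cos δ < 1 := EllZeroAux.cosx_lt_one hδ0 hδ1
  have hcosδpos : 0 < Real.cos δ := EllZeroAux.cosx_pos hδ0 hδ1
  have hδsq : (0:ℝ) < 1 - δ ^ 2 := by nlinarith
  -- eventual facts
  have htid : Tendsto (fun x : ℝ => x) (𝓝[>] (0:ℝ)) (𝓝 0) :=
    tendsto_id.mono_left nhdsWithin_le_nhds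
  have E1 : ∀ᶠ x in 𝓝[>] (0:ℝ), 0 < x :=
    eventually_mem_nhdsWithin.mono fun x hx => hx
  have E2 : ∀ᶠ x in 𝓝[>] (0:ℝ), x < δ := htid.eventually (eventually_lt_nhds hδ0)
  have E3 : ∀ᶠ x in 𝓝[>] (0:ℝ), x < ε / 2 * (1 - Real.cos δ) :=
    htid.eventually (eventually_lt_nhds (by nlinarith))
  have Tsin : Tendsto (fun x : ℝ => Real.sin x / x) (𝓝[>] (0:ℝ)) (𝓝 1) := by
    have h := Real.hasDerivAt_sin 0
    rw [hasDerivAt_iff_tendsto_slope, Real.cos_zero] at h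
    have h2 : Tendsto (slope Real.sin 0) (𝓝[>] (0:ℝ)) (𝓝 1) :=
      h.mono_left (nhdsWithin_mono 0 fun y hy => ne_of_gt hy)
    refine h2.congr fun y => ?_
    rw [slope_def_field]
    simp
  have Tarc : Tendsto (fun x : ℝ => Real.arctan (δ / x)) (𝓝[>] (0:ℝ)) (𝓝 (π / 2)) := by
    have h1 : Tendsto (fun x : ℝ => δ / x) (𝓝[>] (0:ℝ)) atTop := by
      simpa [div_eq_mul_inv] using tendsto_inv_nhdsGT_zero.const_mul_atTop hδ0
    exact (Real.tendsto_arctan_atTop.mono_right nhdsWithin_le_nhds).comp h1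
  have T : Tendsto (fun x : ℝ => 2 / π * (Real.sin x / x) * Real.arctan (δ / x))
      (𝓝[>] (0:ℝ)) (𝓝 (2 / π * 1 * (π / 2))) := (Tsin.const_mul (2 / π)).mul Tarc
  have hval : 2 / π * 1 * (π / 2) = (1:ℝ) := by
    field_simp
  rw [hval] at T
  have E4 : ∀ᶠ x in 𝓝[>] (0:ℝ),
      1 - ε / 2 < 2 / π * (Real.sin x / x) * Real.arctan (δ / x) :=
    T.eventually (eventually_gt_nhds (by linarith))
  filter_upwards [E1, E2, E3, E4] with x hx0 hxδ hxε hxA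
  rw [Real.dist_eq]
  have hx1 : x ≤ 1 := by linarith
  have hsin0 : 0 ≤ Real.sin x := Real.sin_nonneg_of_nonneg_of_le_pi hx0.le (by linarith)
  have hsinle : Real.sin x ≤ x := Real.sin_le hx0.le
  set f : ℝ → ℝ :=
    fun u => Real.sqrt (1 + Real.sin x ^ 2 / (1 - Real.cos u * Real.cos x) ^ 2) with hfdef
  have hfc : Continuous f := EllZeroAux.cont_f hx0 hx1
  have hInt : ∀ a b : ℝ, IntervalIntegrable f MeasureTheory.volume a b := fun a b =>
    hfc.intervalIntegrable a b
  have hDpos : ∀ u : ℝ, 0 < 1 - Real.cos u * Real.cos x := EllZeroAux.denom_pos hx0 hx1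
  -- pointwise bounds
  have hf_ge_one : ∀ u : ℝ, 1 ≤ f u := by
    intro u
    have hs : 0 ≤ Real.sin x ^ 2 / (1 - Real.cos u * Real.cos x) ^ 2 := by positivity
    have h := Real.sqrt_le_sqrt
      (show (1:ℝ) ≤ 1 + Real.sin x ^ 2 / (1 - Real.cos u * Real.cos x) ^ 2 by linarith)
    rwa [Real.sqrt_one] at h
  have hfeq : ∀ u : ℝ, f u =
      Real.sqrt (1 + (Real.sin x / (1 - Real.cos u * Real.cos x)) ^ 2) := by
    intro u
    simp only [hfdef, div_pow]
  have hf_le : ∀ u : ℝ,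
      f u ≤ 1 + Real.sin x / (1 - Real.cos u * Real.cos x) := by
    intro u
    have hD := hDpos u
    have ht0 : 0 ≤ Real.sin x / (1 - Real.cos u * Real.cos x) := div_nonneg hsin0 hD.le
    rw [hfeq u]
    set t := Real.sin x / (1 - Real.cos u * Real.cos x)
    calc Real.sqrt (1 + t ^ 2) ≤ Real.sqrt ((1 + t) ^ 2) :=
          Real.sqrt_le_sqrt (by nlinarith)
      _ = 1 + t := Real.sqrt_sq (by linarith)
  have hf_ge_t : ∀ u : ℝ,
      Real.sin x / (1 - Real.cos u * Real.cos x) ≤ f u := by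
    intro u
    rw [hfeq u]
    set t := Real.sin x / (1 - Real.cos u * Real.cos x)
    calc t ≤ |t| := le_abs_self t
      _ = Real.sqrt (t ^ 2) := (Real.sqrt_sq_eq_abs t).symm
      _ ≤ Real.sqrt (1 + t ^ 2) := Real.sqrt_le_sqrt (by nlinarith)
  have hδ2π : δ ≤ 2 * π - δ := by linarith
  -- middle lower bound
  have hmid_lb : 2 * π - 2 * δ ≤ ∫ u in δ..(2 * π - δ), f u := by
    have h := intervalIntegral.integral_mono_on hδ2π
      intervalIntegrable_const (hInt δ (2 * π - δ)) (fun u _ => hf_ge_one u)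
    rwa [intervalIntegral.integral_const, smul_eq_mul, mul_one,
      show 2 * π - δ - δ = 2 * π - 2 * δ by ring] at h
  -- middle upper bound
  have hmid_ub : ∫ u in δ..(2 * π - δ), f u ≤
      (2 * π - 2 * δ) * (1 + Real.sin x / (1 - Real.cos δ)) := by
    have hpt : ∀ u ∈ Set.Icc δ (2 * π - δ),
        f u ≤ 1 + Real.sin x / (1 - Real.cos δ) := by
      intro u hu
      refine (hf_le u).trans ?_
      have hcu : Real.cos u ≤ Real.cos δ := EllZeroAux.cos_le_cos_mid hδ0.le hu.1 hu.2
      have hcx := EllZeroAux.cosx_pos hx0 hx1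
      have hden : 1 - Real.cos δ ≤ 1 - Real.cos u * Real.cos x := by
        nlinarith [Real.cos_le_one x, mul_nonneg (sub_nonneg.2 hcu) hcx.le,
          mul_nonneg hcosδpos.le (sub_nonneg.2 (Real.cos_le_one x))]
      have := div_le_div_of_nonneg_left hsin0 (by linarith : 0 < 1 - Real.cos δ) hden
      linarith
    have h := intervalIntegral.integral_mono_on hδ2π (hInt δ (2 * π - δ))
      intervalIntegrable_const hpt
    rwa [intervalIntegral.integral_const, smul_eq_mul,
      show 2 * π - δ - δ = 2 * π - 2 * δ by ring] at h
  -- end intervals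
  have hx2pos : ∀ u : ℝ, (0:ℝ) < u ^ 2 + x ^ 2 := fun u =>
    add_pos_of_nonneg_of_pos (sq_nonneg u) (pow_pos hx0 2)
  have hcont_g : Continuous (fun u : ℝ => (u ^ 2 + x ^ 2)⁻¹) :=
    ((continuous_pow 2).add continuous_const).inv₀ fun u => (hx2pos u).ne'
  have hend_lb : 2 * Real.sin x * (1 / x * Real.arctan (δ / x)) ≤
      ∫ u in (0:ℝ)..δ, f u := by
    have hpt : ∀ u ∈ Set.Icc (0:ℝ) δ,
        2 * Real.sin x * (u ^ 2 + x ^ 2)⁻¹ ≤ f u := by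
      intro u hu
      refine le_trans ?_ (hf_ge_t u)
      have hD := hDpos u
      have hle := EllZeroAux.denom_le (u := u) (x := x)
      have h1 : 2 * Real.sin x * (u ^ 2 + x ^ 2)⁻¹ =
          Real.sin x / ((u ^ 2 + x ^ 2) / 2) := by
        field_simp
      rw [h1]
      exact div_le_div_of_nonneg_left hsin0 hD hle
    have h := intervalIntegral.integral_mono_on hδ0.le
      ((continuous_const.mul hcont_g).intervalIntegrable 0 δ) (hInt 0 δ) hpt
    calc 2 * Real.sin x * (1 / x * Real.arctan (δ / x))
        = ∫ u in (0:ℝ)..δ, 2 * Real.sin x * (u ^ 2 + x ^ 2)⁻¹ := by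
          rw [intervalIntegral.integral_const_mul, EllZeroAux.integral_inv_sq_add hx0 δ]
      _ ≤ _ := h
  have hend_ub : ∫ u in (0:ℝ)..δ, f u ≤ δ + π / (1 - δ ^ 2) := by
    have hpt : ∀ u ∈ Set.Icc (0:ℝ) δ,
        f u ≤ 1 + 2 * Real.sin x / (1 - δ ^ 2) * (u ^ 2 + x ^ 2)⁻¹ := by
      intro u hu
      refine (hf_le u).trans ?_
      have hD := hDpos u
      have htay := EllZeroAux.denom_taylor hδ1 hu.1 hu.2 hx0.le hxδ.le
      have hposden : 0 < (1 - δ ^ 2) * (u ^ 2 + x ^ 2) / 2 := by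
        have := mul_pos hδsq (hx2pos u); linarith
      have h1 : Real.sin x / (1 - Real.cos u * Real.cos x) ≤
          Real.sin x / ((1 - δ ^ 2) * (u ^ 2 + x ^ 2) / 2) :=
        div_le_div_of_nonneg_left hsin0 hposden htay
      have h2 : Real.sin x / ((1 - δ ^ 2) * (u ^ 2 + x ^ 2) / 2) =
          2 * Real.sin x / (1 - δ ^ 2) * (u ^ 2 + x ^ 2)⁻¹ := by
        field_simp
      rw [h2] at h1
      linarith
    have h := intervalIntegral.integral_mono_on hδ0.le (hInt 0 δ)
      ((continuous_const.add (continuous_const.mul hcont_g)).intervalIntegrable 0 δ) hpt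
    have heval : (∫ u in (0:ℝ)..δ,
        (1 + 2 * Real.sin x / (1 - δ ^ 2) * (u ^ 2 + x ^ 2)⁻¹))
        = δ + 2 * Real.sin x / (1 - δ ^ 2) * (1 / x * Real.arctan (δ / x)) := by
      rw [intervalIntegral.integral_add (f := fun _ => (1:ℝ))
        (g := fun u => 2 * Real.sin x / (1 - δ ^ 2) * (u ^ 2 + x ^ 2)⁻¹) intervalIntegrable_const
        ((continuous_const.mul hcont_g).intervalIntegrable 0 δ),
        intervalIntegral.integral_const_mul, EllZeroAux.integral_inv_sq_add hx0 δ]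
      simp
    have hA0 : 0 ≤ Real.arctan (δ / x) := by
      rw [← Real.arctan_zero]
      exact Real.arctan_strictMono.monotone (by positivity)
    have hAπ : Real.arctan (δ / x) ≤ π / 2 := (Real.arctan_lt_pi_div_two _).le
    have hnum : 2 * Real.sin x * (1 / x * Real.arctan (δ / x)) ≤ π := by
      have h1 : Real.sin x * Real.arctan (δ / x) ≤ x * (π / 2) :=
        mul_le_mul hsinle hAπ hA0 hx0.le
      have h2 : 2 * Real.sin x * (1 / x * Real.arctan (δ / x))
          = 2 * (Real.sin x * Real.arctan (δ / x)) / x := by ring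
      rw [h2, div_le_iff₀ hx0]
      nlinarith
    have hbound : 2 * Real.sin x / (1 - δ ^ 2) * (1 / x * Real.arctan (δ / x)) ≤
        π / (1 - δ ^ 2) := by
      have h3 : 2 * Real.sin x / (1 - δ ^ 2) * (1 / x * Real.arctan (δ / x)) =
          2 * Real.sin x * (1 / x * Real.arctan (δ / x)) / (1 - δ ^ 2) := by ring
      rw [h3]
      exact div_le_div_of_nonneg_right hnum hδsq.le
    simp only [Pi.add_apply, Pi.mul_apply] at h
    rw [heval] at h
    linarith
  -- splitting and symmetry
  have hsplit : (∫ u in (0:ℝ)..(2 * π), f u)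
      = (∫ u in (0:ℝ)..δ, f u) + (∫ u in δ..(2 * π - δ), f u)
        + (∫ u in (2 * π - δ)..(2 * π), f u) := by
    rw [intervalIntegral.integral_add_adjacent_intervals (hInt 0 δ) (hInt δ (2 * π - δ)),
      intervalIntegral.integral_add_adjacent_intervals (hInt 0 (2 * π - δ))
        (hInt (2 * π - δ) (2 * π))]
  have hsym : (∫ u in (2 * π - δ)..(2 * π), f u) = ∫ u in (0:ℝ)..δ, f u := by
    have h2 := intervalIntegral.integral_comp_sub_left (a := (0:ℝ)) (b := δ) f (2 * π)
    rw [sub_zero] at h2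
    rw [← h2]
    apply intervalIntegral.integral_congr
    intro u hu
    have hc : Real.cos (2 * π - u) = Real.cos u := by
      rw [Real.cos_sub, Real.cos_two_pi, Real.sin_two_pi]; ring
    simp only [hfdef, hc]
  have hIub : (∫ u in (0:ℝ)..(2 * π), f u) ≤
      2 * (δ + π / (1 - δ ^ 2))
        + (2 * π - 2 * δ) * (1 + Real.sin x / (1 - Real.cos δ)) := by
    rw [hsplit, hsym]; linarith
  have hIlb : 2 * (2 * Real.sin x * (1 / x * Real.arctan (δ / x))) + (2 * π - 2 * δ)
      ≤ ∫ u in (0:ℝ)..(2 * π), f u := by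
    rw [hsplit, hsym]; linarith
  -- final numeric estimates
  have hεrw : ellZero x = 1 / (2 * π) * ∫ u in (0:ℝ)..(2 * π), f u := by
    simp only [ellZero, hfdef]
  have hs : Real.sin x / (1 - Real.cos δ) < ε / 2 := by
    rw [div_lt_iff₀ (by linarith : 0 < 1 - Real.cos δ)]
    linarith
  have hs0 : 0 ≤ Real.sin x / (1 - Real.cos δ) := div_nonneg hsin0 (by linarith)
  have hA : π / (1 - δ ^ 2) ≤ π * (1 + 4 / 15 * δ) := by
    rw [div_le_iff₀ hδsq]
    nlinarith [mul_nonneg (mul_nonneg (mul_nonneg Real.pi_pos.le hδ0.le)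
      (show (0:ℝ) ≤ 1 / 4 - δ by linarith)) (show (0:ℝ) ≤ 16 + 4 * δ by linarith)]
  have hIbig : (∫ u in (0:ℝ)..(2 * π), f u) < (2 + ε) * (2 * π) := by
    have h1 : π * (Real.sin x / (1 - Real.cos δ)) < π * (ε / 2) :=
      mul_lt_mul_of_pos_left hs Real.pi_pos
    have h2 : π * δ ≤ π * (ε / 4) := mul_le_mul_of_nonneg_left hδε Real.pi_pos.le
    have h3 : 0 ≤ δ * (Real.sin x / (1 - Real.cos δ)) := mul_nonneg hδ0.le hs0
    have h4 : 3 * ε < π * ε := mul_lt_mul_of_pos_right hπ hε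
    nlinarith [hIub, hA, h1, h2, h3, h4]
  have hIsmall : (2 - ε) * (2 * π) < ∫ u in (0:ℝ)..(2 * π), f u := by
    have hxA' : (1 - ε / 2) * π < 2 * (Real.sin x / x * Real.arctan (δ / x)) := by
      rw [show 2 / π * (Real.sin x / x) * Real.arctan (δ / x)
          = 2 * (Real.sin x / x * Real.arctan (δ / x)) / π from by ring] at hxA
      exact (lt_div_iff₀ Real.pi_pos).mp hxA
    have h4 : 3 * ε < π * ε := mul_lt_mul_of_pos_right hπ hε
    have hkey : Real.sin x / x * Real.arctan (δ / x)
        = Real.sin x * (1 / x * Real.arctan (δ / x)) := by ring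
    rw [hkey] at hxA'
    nlinarith [hIlb, hxA', h4]
  rw [hεrw, abs_lt]
  have h2π0 : (0:ℝ) < 2 * π := by linarith
  constructor
  · have h := mul_lt_mul_of_pos_left hIsmall (show (0:ℝ) < 1 / (2 * π) by positivity)
    have heq : 1 / (2 * π) * ((2 - ε) * (2 * π)) = 2 - ε := by
      field_simp
    rw [heq] at h
    linarith
  · have h := mul_lt_mul_of_pos_left hIbig (show (0:ℝ) < 1 / (2 * π) by positivity)
    have heq : 1 / (2 * π) * ((2 + ε) * (2 * π)) = 2 + ε := by
      field_simp
    rw [heq] at h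
    linarith
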